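/- There is no family of measurable functions F_p : Ω → {1,2,3}, indexed by probability distributions p on {1,2,3} over a probability space (Ω, μ), such that both (1) μ(F_p^{-1}(i)) = p_i for all p and i, and (2) μ(F_p^{-1}(i) ∩ F_q^{-1}(i)) = min(μ(F_p^{-1}(i)), μ(F_q^{-1}(i))) for all p, q, and i. -/

import Mathlib

open MeasureTheory

private lemma stmt_9_aux {Ω : Type*} [MeasurableSpace Ω] (μ : Measure Ω) {X S : Set Ω}
    (hS : MeasurableSet S) (hX : μ X ≠ ⊤) (h : μ (X ∩ S) = μ X) : μ (X \ S) = 0 := by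
  have key : μ (X ∩ S) + μ (X \ S) = μ X := measure_inter_add_diff X hS
  rw [h] at key
  exact (ENNReal.add_right_inj hX).mp (key.trans (add_zero (μ X)).symm)

/-- There is no family of measurable functions `F p : Ω → Fin 3`, indexed by probability
distributions `p` on `{1,2,3}`, such that (1) `μ (F p ⁻¹' {i}) = p i` for all `p`, `i`, and
(2) `μ (F p ⁻¹' {i} ∩ F q ⁻¹' {i}) = min (μ (F p ⁻¹' {i})) (μ (F q ⁻¹' {i}))` for all `p`, `q`, `i`. -/
theorem stmt_9 (Ω : Type*) [MeasurableSpace Ω] (μ : Measure Ω) [IsProbabilityMeasure μ] :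
    ¬ ∃ F : (Fin 3 → ℝ) → Ω → Fin 3,
      (∀ p : Fin 3 → ℝ, (∀ i, 0 ≤ p i) → (∑ i, p i = 1) → Measurable (F p)) ∧
      (∀ p : Fin 3 → ℝ, (∀ i, 0 ≤ p i) → (∑ i, p i = 1) →
        ∀ i, μ (F p ⁻¹' {i}) = ENNReal.ofReal (p i)) ∧
      (∀ p q : Fin 3 → ℝ, (∀ i, 0 ≤ p i) → (∑ i, p i = 1) →
        (∀ i, 0 ≤ q i) → (∑ i, q i = 1) →
        ∀ i, μ (F p ⁻¹' {i} ∩ F q ⁻¹' {i}) = min (μ (F p ⁻¹' {i})) (μ (F q ⁻¹' {i}))) := by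
  rintro ⟨F, hmeas, h1, h2⟩
  set p : Fin 3 → ℝ := ![1/2, 1/2, 0] with hp
  set q : Fin 3 → ℝ := ![1/2, 0, 1/2] with hq
  set r : Fin 3 → ℝ := ![0, 1/2, 1/2] with hr
  have hpn : ∀ i, 0 ≤ p i := by intro i; fin_cases i <;> norm_num [hp]
  have hqn : ∀ i, 0 ≤ q i := by intro i; fin_cases i <;> norm_num [hq]
  have hrn : ∀ i, 0 ≤ r i := by intro i; fin_cases i <;> norm_num [hr]
  have hps : ∑ i, p i = 1 := by norm_num [hp, Fin.sum_univ_three, Matrix.cons_val_two, Matrix.tail_cons, Matrix.head_cons]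
  have hqs : ∑ i, q i = 1 := by norm_num [hq, Fin.sum_univ_three, Matrix.cons_val_two, Matrix.tail_cons, Matrix.head_cons]
  have hrs : ∑ i, r i = 1 := by norm_num [hr, Fin.sum_univ_three, Matrix.cons_val_two, Matrix.tail_cons, Matrix.head_cons]
  set half : ENNReal := ENNReal.ofReal (1/2) with hhalf
  have hhne : half ≠ ⊤ := ENNReal.ofReal_ne_top
  have hh0 : half ≠ 0 := by
    rw [hhalf]; simp [ENNReal.ofReal_eq_zero]
  -- marginals
  have hA : μ (F p ⁻¹' {0}) = half := by
    have := h1 p hpn hps 0; simpa [hp, hhalf, one_div] using this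
  have hB : μ (F p ⁻¹' {1}) = half := by
    have := h1 p hpn hps 1; simpa [hp, hhalf, one_div] using this
  have hP2 : μ (F p ⁻¹' {2}) = 0 := by
    have := h1 p hpn hps 2; simpa [hp, hhalf, one_div] using this
  have hS0 : μ (F q ⁻¹' {0}) = half := by
    have := h1 q hqn hqs 0; simpa [hq, hhalf, one_div] using this
  have hC : μ (F q ⁻¹' {2}) = half := by
    have := h1 q hqn hqs 2; simpa [hq, hhalf, one_div] using this
  have hT1 : μ (F r ⁻¹' {1}) = half := by
    have := h1 r hrn hrs 1; simpa [hr, hhalf, one_div] using this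
  have hT2 : μ (F r ⁻¹' {2}) = half := by
    have := h1 r hrn hrs 2; simpa [hr, hhalf, one_div] using this
  -- maximal couplings
  have e1 : μ (F p ⁻¹' {0} ∩ F q ⁻¹' {0}) = half := by
    have := h2 p q hpn hps hqn hqs 0; rw [hA, hS0, min_self] at this; exact this
  have e2 : μ (F p ⁻¹' {1} ∩ F r ⁻¹' {1}) = half := by
    have := h2 p r hpn hps hrn hrs 1; rw [hB, hT1, min_self] at this; exact this
  have e3 : μ (F q ⁻¹' {2} ∩ F r ⁻¹' {2}) = half := by
    have := h2 q r hqn hqs hrn hrs 2; rw [hC, hT2, min_self] at this; exact this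
  -- a.e. identifications
  have mq : MeasurableSet (F q ⁻¹' {0}) := (hmeas q hqn hqs) (measurableSet_singleton _)
  have mr1 : MeasurableSet (F r ⁻¹' {1}) := (hmeas r hrn hrs) (measurableSet_singleton _)
  have mr2 : MeasurableSet (F r ⁻¹' {2}) := (hmeas r hrn hrs) (measurableSet_singleton _)
  have d1 : μ (F p ⁻¹' {0} \ F q ⁻¹' {0}) = 0 :=
    stmt_9_aux μ mq (by rw [hA]; exact hhne) (by rw [e1, hA])
  have d2 : μ (F p ⁻¹' {1} \ F r ⁻¹' {1}) = 0 :=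
    stmt_9_aux μ mr1 (by rw [hB]; exact hhne) (by rw [e2, hB])
  have d3 : μ (F q ⁻¹' {2} \ F r ⁻¹' {2}) = 0 :=
    stmt_9_aux μ mr2 (by rw [hC]; exact hhne) (by rw [e3, hC])
  -- C ∩ A has measure 0
  have z1 : μ (F q ⁻¹' {2} ∩ F p ⁻¹' {0}) = 0 := by
    refine measure_mono_null ?_ d1
    rintro u ⟨hu2, hu0⟩
    exact ⟨hu0, fun h => by simp only [Set.mem_preimage, Set.mem_singleton_iff] at h hu2; omega⟩
  -- C ∩ B has measure 0
  have z2 : μ (F q ⁻¹' {2} ∩ F p ⁻¹' {1}) = 0 := by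
    have sub : F q ⁻¹' {2} ∩ F p ⁻¹' {1} ⊆
        (F q ⁻¹' {2} \ F r ⁻¹' {2}) ∪ (F p ⁻¹' {1} \ F r ⁻¹' {1}) := by
      rintro u ⟨huC, huB⟩
      by_cases h : F r u = 2
      · exact Or.inr ⟨huB, fun h1 => by
          simp only [Set.mem_preimage, Set.mem_singleton_iff] at h1; omega⟩
      · exact Or.inl ⟨huC, fun h2 => h (by
          simpa using h2)⟩
    refine measure_mono_null sub ?_
    exact measure_union_null d3 d2
  -- C outside A ∪ B has measure 0
  have z3 : μ (F q ⁻¹' {2} \ (F p ⁻¹' {0} ∪ F p ⁻¹' {1})) = 0 := by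
    refine measure_mono_null ?_ hP2
    rintro u ⟨_, hu⟩
    simp only [Set.mem_union, Set.mem_preimage, Set.mem_singleton_iff, not_or] at hu ⊢
    omega
  -- conclude
  have cover : F q ⁻¹' {2} ⊆
      (F q ⁻¹' {2} ∩ F p ⁻¹' {0}) ∪ (F q ⁻¹' {2} ∩ F p ⁻¹' {1}) ∪
      (F q ⁻¹' {2} \ (F p ⁻¹' {0} ∪ F p ⁻¹' {1})) := by
    intro u hu
    by_cases h0 : u ∈ F p ⁻¹' {0}
    · exact Or.inl (Or.inl ⟨hu, h0⟩)
    by_cases h1 : u ∈ F p ⁻¹' {1}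
    · exact Or.inl (Or.inr ⟨hu, h1⟩)
    · exact Or.inr ⟨hu, fun h => h.elim h0 h1⟩
  have : μ (F q ⁻¹' {2}) = 0 :=
    measure_mono_null cover (measure_union_null (measure_union_null z1 z2) z3)
  rw [hC] at this
  exact hh0 this
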